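/- Let ξ = √((√33 − 1)/24), α = √((1 + 2ξ)/(1 − 2ξ)), and y₀ > 0. Let (x, y) solve ẋ = y, ẏ = −1 with initial condition (x(0), y(0)) = (−ξ y₀², y₀). Then at time t₁ = (1 + 1/α) y₀ one has y(t₁) = −y₀/α and x(t₁) = ξ y₀²/α² = ξ y(t₁)²; that is, starting from the point (−ξ y₀², y₀) of the switching curve x = −ξ sign(y) y², the bang arc with u = −1 reaches the switching curve again at the scaled point with ratios x(t₁)/x(0) = −1/α² and y(t₁)/y(0) = −1/α. -/

import Mathlib

open Set

/-- For the Fuller model, let ξ = √((√33 − 1)/24),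
α = √((1 + 2ξ)/(1 − 2ξ)), y₀ > 0, and let (x, y) solve ẋ = y, ẏ = −1 with
(x(0), y(0)) = (−ξ y₀², y₀).  Then at t₁ = (1 + 1/α) y₀ one has y(t₁) = −y₀/α and
x(t₁) = ξ y₀²/α² = ξ y(t₁)²: the bang arc with u = −1 starting on the switching curve
reaches it again with scaling ratios x(t₁)/x(0) = −1/α² and y(t₁)/y(0) = −1/α. -/
theorem fuller_bang_arc_selfsimilar
    (ξ α y0 : ℝ)
    (hξ : ξ = Real.sqrt ((Real.sqrt 33 - 1) / 24))
    (hα : α = Real.sqrt ((1 + 2 * ξ) / (1 - 2 * ξ)))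
    (hy0 : 0 < y0)
    (x y : ℝ → ℝ)
    (hx : ∀ t, HasDerivAt x (y t) t)
    (hy : ∀ t, HasDerivAt y (-1) t)
    (hx0 : x 0 = -ξ * y0 ^ 2)
    (hy0' : y 0 = y0) :
    y ((1 + 1 / α) * y0) = -y0 / α ∧
    x ((1 + 1 / α) * y0) = ξ * y0 ^ 2 / α ^ 2 ∧
    x ((1 + 1 / α) * y0) = ξ * (y ((1 + 1 / α) * y0)) ^ 2 ∧
    x ((1 + 1 / α) * y0) / x 0 = -(1 / α ^ 2) ∧
    y ((1 + 1 / α) * y0) / y 0 = -(1 / α) := by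
  -- basic facts about ξ
  have h33 : (1:ℝ) ≤ Real.sqrt 33 := by
    rw [show (1:ℝ) = Real.sqrt 1 by simp]
    exact Real.sqrt_le_sqrt (by norm_num)
  have hs0 : (0:ℝ) ≤ (Real.sqrt 33 - 1) / 24 := by linarith
  have hξ0 : 0 < ξ := by
    rw [hξ]
    apply Real.sqrt_pos.2
    have : (1:ℝ) < Real.sqrt 33 := by
      rw [show (1:ℝ) = Real.sqrt 1 by simp]
      exact Real.sqrt_lt_sqrt (by norm_num) (by norm_num)
    linarith
  have hξlt : ξ < 1 / 2 := by
    rw [hξ]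
    have h7 : Real.sqrt 33 < 7 := by
      have := Real.sqrt_lt_sqrt (by norm_num : (0:ℝ) ≤ 33) (by norm_num : (33:ℝ) < 49)
      have : Real.sqrt 49 = 7 := by
        rw [show (49:ℝ) = 7 ^ 2 by norm_num]
        exact Real.sqrt_sq (by norm_num)
      linarith [Real.sqrt_lt_sqrt (by norm_num : (0:ℝ) ≤ 33) (by norm_num : (33:ℝ) < 49)]
    have : (Real.sqrt 33 - 1) / 24 < (1/2) ^ 2 := by norm_num; linarith
    calc Real.sqrt ((Real.sqrt 33 - 1) / 24) < Real.sqrt ((1/2)^2) :=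
          Real.sqrt_lt_sqrt hs0 this
      _ = 1/2 := Real.sqrt_sq (by norm_num)
  have hden : 0 < 1 - 2 * ξ := by linarith
  have hnum : 0 < 1 + 2 * ξ := by linarith
  have hα0 : 0 < α := by
    rw [hα]; exact Real.sqrt_pos.2 (div_pos hnum hden)
  have hα2 : α ^ 2 = (1 + 2 * ξ) / (1 - 2 * ξ) := by
    rw [hα, sq, Real.mul_self_sqrt (le_of_lt (div_pos hnum hden))]
  have hαkey : α ^ 2 * (1 - 2 * ξ) = 1 + 2 * ξ := by
    rw [hα2]; field_simp
  have hαne : α ≠ 0 := ne_of_gt hα0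
  -- y is affine
  have hyform : ∀ t, y t = y0 - t := by
    intro t
    have hdiff : ∀ s, HasDerivAt (fun s => y s + s) 0 s := by
      intro s
      have := (hy s).add (hasDerivAt_id s)
      exact this.congr_deriv (by norm_num)
    have hconst : (fun s => y s + s) t = (fun s => y s + s) 0 :=
      is_const_of_deriv_eq_zero (fun s => (hdiff s).differentiableAt)
        (fun s => (hdiff s).deriv) t 0
    simp only [hy0'] at hconst
    linarith [hconst]
  -- x is quadratic
  have hxform : ∀ t, x t = -ξ * y0 ^ 2 + y0 * t - t ^ 2 / 2 := by
    intro t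
    have hdiff : ∀ s, HasDerivAt (fun s => x s - (y0 * s - s ^ 2 / 2)) 0 s := by
      intro s
      have h1 : HasDerivAt (fun s : ℝ => y0 * s - s ^ 2 / 2) (y0 - s) s := by
        have h2 : HasDerivAt (fun s : ℝ => y0 * s) y0 s := by
          simpa using (hasDerivAt_id s).const_mul y0
        have h3 : HasDerivAt (fun s : ℝ => s ^ 2 / 2) s s := by
          have := (hasDerivAt_pow 2 s).div_const 2
          simpa using this
        exact h2.sub h3
      have := (hx s).sub h1
      rw [hyform s] at this
      exact this.congr_deriv (by ring)
    have hconst : (fun s => x s - (y0 * s - s ^ 2 / 2)) t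
        = (fun s => x s - (y0 * s - s ^ 2 / 2)) 0 :=
      is_const_of_deriv_eq_zero (fun s => (hdiff s).differentiableAt)
        (fun s => (hdiff s).deriv) t 0
    simp only [hx0] at hconst
    have : x t - (y0 * t - t ^ 2 / 2) = -ξ * y0 ^ 2 := by
      simpa using hconst
    linarith
  set t1 := (1 + 1 / α) * y0 with ht1
  have hy1 : y t1 = -y0 / α := by
    rw [hyform, ht1]; field_simp; ring
  have hx1 : x t1 = ξ * y0 ^ 2 / α ^ 2 := by
    rw [hxform, ht1]
    field_simp
    linear_combination hαkey
  have hxpos : 0 < ξ * y0 ^ 2 := by positivity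
  have hxne : -ξ * y0 ^ 2 ≠ 0 := ne_of_lt (by linarith)
  refine ⟨hy1, hx1, ?_, ?_, ?_⟩
  · rw [hx1, hy1]; field_simp
  · rw [hx1, hx0, div_eq_iff hxne]
    field_simp
  · rw [hy1, hy0']
    field_simp
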